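/- Let A be a positive definite Hermitian d×d complex matrix and B a positive semidefinite Hermitian d×d matrix with tr B = 1 that commutes with A. Let P be the orthogonal projection onto the range (support) of B. Then tr( B³ · A⁻² ) ≥ ( tr(P·A) )⁻². In particular tr(B³A⁻²) ≥ (tr A)⁻². -/

import Mathlib

open Matrix MeasureTheory
open scoped ComplexOrder

noncomputable section

/-- Logarithm of a matrix: for a Hermitian matrix, apply the real logarithm to the
eigenvalues via the spectral decomposition (functional calculus); junk value `0`
for non-Hermitian matrices. -/
def matLog {d : ℕ} (A : Matrix (Fin d) (Fin d) ℂ) : Matrix (Fin d) (Fin d) ℂ :=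
  if hA : A.IsHermitian then
    (hA.eigenvectorUnitary : Matrix (Fin d) (Fin d) ℂ) *
      Matrix.diagonal (fun i => (Real.log (hA.eigenvalues i) : ℂ)) *
      (star hA.eigenvectorUnitary : Matrix (Fin d) (Fin d) ℂ)
  else 0

/-- The absolute value `|A| = √(AᴴA)` of a matrix. -/
def matAbs {d : ℕ} (A : Matrix (Fin d) (Fin d) ℂ) : Matrix (Fin d) (Fin d) ℂ :=
  (((Matrix.posSemidef_conjTranspose_mul_self A).1.eigenvectorUnitary : Matrix (Fin d) (Fin d) ℂ) *
    Matrix.diagonal (fun i => ((Real.sqrt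
      ((Matrix.posSemidef_conjTranspose_mul_self A).1.eigenvalues i) : ℝ) : ℂ)) *
    (star (Matrix.posSemidef_conjTranspose_mul_self A).1.eigenvectorUnitary : Matrix (Fin d) (Fin d) ℂ))

/-- The trace norm `‖A‖₁ = tr √(AᴴA)`. -/
def traceNorm {d : ℕ} (A : Matrix (Fin d) (Fin d) ℂ) : ℝ :=
  ((matAbs A).trace).re

/-- The positive part `A₊ = (A + |A|)/2` of a (Hermitian) matrix. -/
def matPos {d : ℕ} (A : Matrix (Fin d) (Fin d) ℂ) : Matrix (Fin d) (Fin d) ℂ :=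
  (2⁻¹ : ℂ) • (A + matAbs A)

/-- The negative part `A₋ = (|A| − A)/2` of a (Hermitian) matrix. -/
def matNeg {d : ℕ} (A : Matrix (Fin d) (Fin d) ℂ) : Matrix (Fin d) (Fin d) ℂ :=
  (2⁻¹ : ℂ) • (matAbs A - A)

/-- The quantum relative entropy `S(ρ‖σ) = tr ρ (log ρ − log σ)`. -/
def relEnt {d : ℕ} (ρ σ : Matrix (Fin d) (Fin d) ℂ) : ℝ :=
  ((ρ * (matLog ρ - matLog σ)).trace).re

/-- Smallest eigenvalue of a Hermitian matrix. -/
def lamMin {d : ℕ} {A : Matrix (Fin d) (Fin d) ℂ} (hA : A.IsHermitian) : ℝ :=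
  ⨅ i, hA.eigenvalues i

/-- The asymmetry function of the binary Kullback–Leibler divergence:
`a(p,t) = (2p+t)·log(1+t/p) + (2(1−p)−t)·log(1−t/(1−p))`. -/
def asym (p t : ℝ) : ℝ :=
  (2 * p + t) * Real.log (1 + t / p) + (2 * (1 - p) - t) * Real.log (1 - t / (1 - p))

section Aux


private lemma radon2 {X Y Sx Sy : ℝ} (hX : 0 ≤ X) (hSx : 0 ≤ Sx) (hY : 0 < Y) (hSy : 0 < Sy) :
    (X + Sx)^3 / (Y + Sy)^2 ≤ X^3 / Y^2 + Sx^3 / Sy^2 := by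
  rw [div_add_div _ _ (by positivity) (by positivity),
    div_le_div_iff₀ (by positivity) (by positivity)]
  nlinarith [mul_nonneg hY.le (mul_nonneg (sq_nonneg (X*Sy - Sx*Y))
      (by positivity : (0:ℝ) ≤ 2*X*Sy + Sx*Y)),
    mul_nonneg hSy.le (mul_nonneg (sq_nonneg (X*Sy - Sx*Y))
      (by positivity : (0:ℝ) ≤ X*Sy + 2*Sx*Y))]

private lemma radon_sum {ι : Type*} (s : Finset ι) (x y : ι → ℝ)
    (hx : ∀ i ∈ s, 0 ≤ x i) (hy : ∀ i ∈ s, 0 < y i) :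
    (∑ i ∈ s, x i)^3 / (∑ i ∈ s, y i)^2 ≤ ∑ i ∈ s, (x i)^3 / (y i)^2 := by
  classical
  revert hx hy
  induction s using Finset.induction_on with
  | empty => intro _ _; simp
  | @insert a s ha ih =>
    intro hx hy
    rw [Finset.sum_insert ha, Finset.sum_insert ha, Finset.sum_insert ha]
    rcases s.eq_empty_or_nonempty with rfl | hne
    · simp
    · have hys : 0 < ∑ i ∈ s, y i :=
        Finset.sum_pos (fun i hi => hy i (Finset.mem_insert_of_mem hi)) hne
      have hxs : 0 ≤ ∑ i ∈ s, x i :=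
        Finset.sum_nonneg fun i hi => hx i (Finset.mem_insert_of_mem hi)
      refine le_trans (radon2 (hx a (Finset.mem_insert_self a s)) hxs
        (hy a (Finset.mem_insert_self a s)) hys) ?_
      exact add_le_add (le_refl _) (ih (fun i hi => hx i (Finset.mem_insert_of_mem hi))
        (fun i hi => hy i (Finset.mem_insert_of_mem hi)))

private lemma star_mulVec_dot {d : ℕ} (M : Matrix (Fin d) (Fin d) ℂ) (x y : Fin d → ℂ) :
    star (M *ᵥ x) ⬝ᵥ y = star x ⬝ᵥ (Mᴴ *ᵥ y) := by
  rw [star_mulVec, ← Matrix.dotProduct_mulVec]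

private lemma key_cs {d : ℕ} {A : Matrix (Fin d) (Fin d) ℂ} (hA : A.PosDef)
    (v : Fin d → ℂ) (hv : star v ⬝ᵥ v = 1) :
    1 ≤ ((star v ⬝ᵥ (A *ᵥ v)).re)^2 * ((star v ⬝ᵥ ((A⁻¹ * A⁻¹) *ᵥ v)).re) := by
  have hdet : IsUnit A.det := isUnit_iff_ne_zero.2 hA.det_pos.ne'
  have hAinv : A * A⁻¹ = 1 := Matrix.mul_nonsing_inv A hdet
  have hAinvH : (A⁻¹).IsHermitian := hA.inv.isHermitian
  open scoped MatrixOrder in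
  set S := CFC.sqrt A with hSdef
  have hS2 : S * S = A := by
    open scoped MatrixOrder in exact CFC.sqrt_mul_sqrt_self A hA.posSemidef.nonneg
  have hSh : S.IsHermitian := by
    open scoped MatrixOrder in exact (CFC.sqrt_nonneg A).posSemidef.1
  set w : Fin d → ℂ := A⁻¹ *ᵥ v with hw
  have hAw : A *ᵥ w = v := by
    rw [hw, Matrix.mulVec_mulVec, hAinv, Matrix.one_mulVec]
  set e : (Fin d → ℂ) ≃ EuclideanSpace ℂ (Fin d) := (WithLp.equiv 2 _).symm with he
  have hinner : ∀ x y : Fin d → ℂ, (inner ℂ (e x) (e y) : ℂ) = star x ⬝ᵥ y := fun x y =>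
    by rw [dotProduct_comm]; rfl
  set a : ℝ := (star v ⬝ᵥ (A *ᵥ v)).re with ha
  set c : ℝ := (star v ⬝ᵥ ((A⁻¹ * A⁻¹) *ᵥ v)).re with hc
  set r : ℝ := (star w ⬝ᵥ v).re with hr
  have h1 : (inner ℂ (e (S *ᵥ v)) (e (S *ᵥ w)) : ℂ) = 1 := by
    rw [hinner, star_mulVec_dot, hSh.eq, Matrix.mulVec_mulVec, hS2, hAw, hv]
  have h2 : ‖e (S *ᵥ v)‖^2 = a := by
    have : (inner ℂ (e (S *ᵥ v)) (e (S *ᵥ v)) : ℂ) = star v ⬝ᵥ (A *ᵥ v) := by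
      rw [hinner, star_mulVec_dot, hSh.eq, Matrix.mulVec_mulVec, hS2]
    rw [← inner_self_eq_norm_sq (𝕜 := ℂ), this, ha, RCLike.re_to_complex]
  have h3 : ‖e (S *ᵥ w)‖^2 = r := by
    have : (inner ℂ (e (S *ᵥ w)) (e (S *ᵥ w)) : ℂ) = star w ⬝ᵥ v := by
      rw [hinner, star_mulVec_dot, hSh.eq, Matrix.mulVec_mulVec, hS2, hAw]
    rw [← inner_self_eq_norm_sq (𝕜 := ℂ), this, hr, RCLike.re_to_complex]
  have h4 : 1 ≤ a * r := by
    have := norm_inner_le_norm (𝕜 := ℂ) (e (S *ᵥ v)) (e (S *ᵥ w))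
    rw [h1] at this
    simp only [norm_one] at this
    calc (1:ℝ) = 1 * 1 := (one_mul 1).symm
    _ ≤ (‖e (S *ᵥ v)‖ * ‖e (S *ᵥ w)‖) * (‖e (S *ᵥ v)‖ * ‖e (S *ᵥ w)‖) :=
        mul_le_mul this this zero_le_one (le_trans zero_le_one this)
    _ = ‖e (S *ᵥ v)‖^2 * ‖e (S *ᵥ w)‖^2 := by ring
    _ = a * r := by rw [h2, h3]
  have h5 : ‖e v‖^2 = 1 := by
    have : (inner ℂ (e v) (e v) : ℂ) = 1 := by rw [hinner, hv]
    rw [← inner_self_eq_norm_sq (𝕜 := ℂ), this, RCLike.re_to_complex]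
    simp
  have h6 : ‖e w‖^2 = c := by
    have : (inner ℂ (e w) (e w) : ℂ) = star v ⬝ᵥ ((A⁻¹ * A⁻¹) *ᵥ v) := by
      rw [hinner, hw, star_mulVec_dot, hAinvH.eq, Matrix.mulVec_mulVec]
    rw [← inner_self_eq_norm_sq (𝕜 := ℂ), this, hc, RCLike.re_to_complex]
  have h7 : r ≤ ‖e w‖ := by
    have hre : r = (inner ℂ (e w) (e v) : ℂ).re := by rw [hinner]
    have := norm_inner_le_norm (𝕜 := ℂ) (e w) (e v)
    have h5' : ‖e v‖ = 1 := by nlinarith [norm_nonneg (e v), h5]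
    rw [h5', mul_one] at this
    calc r = (inner ℂ (e w) (e v) : ℂ).re := hre
    _ ≤ ‖(inner ℂ (e w) (e v) : ℂ)‖ := Complex.re_le_norm _
    _ ≤ ‖e w‖ := this
  have h8 : 0 ≤ r := by rw [← h3]; positivity
  have h9 : r^2 ≤ c := by rw [← h6]; nlinarith [h7, h8]
  have ha0 : 0 ≤ a := by nlinarith
  calc (1:ℝ) ≤ (a * r)^2 := by nlinarith
  _ = a^2 * r^2 := by ring
  _ ≤ a^2 * c := by nlinarith [sq_nonneg a]

private lemma aux_ext_mulVec {d : ℕ} {M N : Matrix (Fin d) (Fin d) ℂ}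
    (h : ∀ x, M *ᵥ x = N *ᵥ x) : M = N := by
  ext i j
  have := congrFun (h (Pi.single j 1)) i
  simpa using this

private lemma aux_trace_diagonal_mul {d : ℕ} (v : Fin d → ℂ) (M : Matrix (Fin d) (Fin d) ℂ) :
    (Matrix.diagonal v * M).trace = ∑ i, v i * M i i := by
  simp [Matrix.trace, Matrix.diag, Matrix.diagonal_mul]

private lemma aux_diag_entry {d : ℕ} (V X : Matrix (Fin d) (Fin d) ℂ) (i : Fin d) :
    (star V * X * V) i i = star (fun k => V k i) ⬝ᵥ (X *ᵥ (fun k => V k i)) := by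
  simp only [Matrix.mul_apply, Matrix.mulVec, dotProduct, Matrix.star_apply,
    Pi.star_apply, Finset.sum_mul, Finset.mul_sum]
  rw [Finset.sum_comm]
  refine Finset.sum_congr rfl fun k _ => Finset.sum_congr rfl fun l _ => by ring

private lemma aux_fix {d : ℕ} (M N : Matrix (Fin d) (Fin d) ℂ) (hMM : M * M = M)
    (hle : LinearMap.range N.mulVecLin ≤ LinearMap.range M.mulVecLin) : M * N = N := by
  apply aux_ext_mulVec
  intro x
  rw [← Matrix.mulVec_mulVec]
  obtain ⟨y, hy⟩ := hle (LinearMap.mem_range_self N.mulVecLin x)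
  simp only [Matrix.mulVecLin_apply] at hy
  rw [← hy, Matrix.mulVec_mulVec, hMM]

end Aux

/-- For positive definite `A` and positive semidefinite `B` with `tr B = 1` commuting
with `A`, and `P` the orthogonal projection onto the support of `B` (a Hermitian
idempotent with the same range as `B`): `tr(B³A⁻²) ≥ (tr(PA))⁻²`, and in particular
`tr(B³A⁻²) ≥ (tr A)⁻²`. -/
theorem trace_cube_inv_sq_ge {d : ℕ} (A B : Matrix (Fin d) (Fin d) ℂ)
    (hA : A.PosDef) (hB : B.PosSemidef) (htr : B.trace = 1) (hcomm : Commute A B)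
    (P : Matrix (Fin d) (Fin d) ℂ) (hP : P.IsHermitian) (hP2 : P * P = P)
    (hrange : LinearMap.range P.mulVecLin = LinearMap.range B.mulVecLin) :
    (((P * A).trace.re) ^ 2)⁻¹ ≤ ((B ^ 3 * (A⁻¹) ^ 2).trace).re ∧
      ((A.trace.re) ^ 2)⁻¹ ≤ ((B ^ 3 * (A⁻¹) ^ 2).trace).re := by
  classical
  have hBh : B.IsHermitian := hB.1
  set V : Matrix (Fin d) (Fin d) ℂ := (hBh.eigenvectorUnitary : Matrix (Fin d) (Fin d) ℂ)
    with hVdef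
  set W : Matrix (Fin d) (Fin d) ℂ := star V with hWdef
  have hV1 : W * V = 1 := Matrix.mem_unitaryGroup_iff'.mp (hBh.eigenvectorUnitary).2
  have hWV : ∀ X : Matrix (Fin d) (Fin d) ℂ, W * (V * X) = X := fun X => by
    rw [← Matrix.mul_assoc, hV1, Matrix.one_mul]
  set b : Fin d → ℝ := hBh.eigenvalues with hbdef
  have hb0 : ∀ i, 0 ≤ b i := fun i => hB.eigenvalues_nonneg i
  have hspec : B = V * Matrix.diagonal (fun i => (b i : ℂ)) * W := hBh.spectral_theorem
  -- multiplication of conjugated diagonals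
  have hconjmul : ∀ v w : Fin d → ℂ,
      (V * Matrix.diagonal v * W) * (V * Matrix.diagonal w * W)
        = V * Matrix.diagonal (fun i => v i * w i) * W := by
    intro v w
    calc (V * Matrix.diagonal v * W) * (V * Matrix.diagonal w * W)
        = V * (Matrix.diagonal v * (W * (V * (Matrix.diagonal w * W)))) := by
          simp only [Matrix.mul_assoc]
      _ = V * (Matrix.diagonal v * (Matrix.diagonal w * W)) := by rw [hWV]
      _ = V * (Matrix.diagonal v * Matrix.diagonal w) * W := by simp only [Matrix.mul_assoc]
      _ = _ := by rw [Matrix.diagonal_mul_diagonal]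
  -- columns of V
  set col : Fin d → (Fin d → ℂ) := fun i k => V k i with hcoldef
  have hdiagentry : ∀ (X : Matrix (Fin d) (Fin d) ℂ) (i : Fin d),
      (W * X * V) i i = star (col i) ⬝ᵥ (X *ᵥ col i) := fun X i => aux_diag_entry V X i
  have hcol1 : ∀ i, star (col i) ⬝ᵥ col i = 1 := by
    intro i
    have h := hdiagentry 1 i
    rw [Matrix.mul_one, hV1, Matrix.one_mulVec] at h
    rw [← h, Matrix.one_apply_eq]
  have hcolne : ∀ i, col i ≠ 0 := by
    intro i h
    have := hcol1 i
    rw [h] at this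
    simp at this
  set a : Fin d → ℝ := fun i => ((W * A * V) i i).re with hadef
  set c : Fin d → ℝ := fun i => ((W * (A⁻¹ * A⁻¹) * V) i i).re with hcdef
  have hapos : ∀ i, 0 < a i := by
    intro i
    have h := hA.re_dotProduct_pos (hcolne i)
    have h2 := hdiagentry A i
    simp only [hadef, h2]
    exact h
  have hkey : ∀ i, 1 ≤ (a i)^2 * c i := by
    intro i
    simp only [hadef, hcdef, hdiagentry A i, hdiagentry (A⁻¹ * A⁻¹) i]
    exact key_cs hA (col i) (hcol1 i)
  have hcpos : ∀ i, 0 < c i := fun i => by nlinarith [hkey i, sq_nonneg (a i), hapos i]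
  -- traces of conjugated diagonals against M
  have htr_conj : ∀ (v : Fin d → ℂ) (M : Matrix (Fin d) (Fin d) ℂ),
      (V * Matrix.diagonal v * W * M).trace = ∑ i, v i * (W * M * V) i i := by
    intro v M
    have h1 : V * Matrix.diagonal v * W * M = V * (Matrix.diagonal v * (W * M)) := by
      simp only [Matrix.mul_assoc]
    rw [h1, Matrix.trace_mul_comm, Matrix.mul_assoc, aux_trace_diagonal_mul]
  -- B ^ 3
  have hB2 : B * B = V * Matrix.diagonal (fun i => (b i : ℂ) * (b i : ℂ)) * W := by
    rw [hspec, hconjmul]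
  have hB3 : B ^ 3 = V * Matrix.diagonal (fun i => ((b i : ℂ))^3) * W := by
    rw [pow_succ, pow_succ, pow_one, hB2, hspec, hconjmul]
    have hfun : (fun i => ((b i : ℂ) * (b i : ℂ)) * (b i : ℂ)) = fun i => ((b i : ℂ))^3 :=
      funext fun i => by ring
    rw [hfun]
  -- main trace
  have htrS : ((B ^ 3 * (A⁻¹) ^ 2).trace).re = ∑ i, (b i)^3 * c i := by
    rw [hB3, pow_two, htr_conj, Complex.re_sum]
    refine Finset.sum_congr rfl fun i _ => ?_
    have h3 : ((b i : ℂ))^3 = ((b i ^ 3 : ℝ) : ℂ) := by push_cast; ring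
    rw [h3, Complex.re_ofReal_mul]
  -- trace of B
  have hsum_b : ∑ i, b i = 1 := by
    have h1 : B.trace = ∑ i, (b i : ℂ) := by
      rw [hspec, Matrix.trace_mul_cycle, hV1, Matrix.one_mul, Matrix.trace_diagonal]
    rw [htr, ← Complex.ofReal_sum] at h1
    exact_mod_cast h1.symm
  -- identify P
  set p : Fin d → ℂ := fun i => if b i = 0 then 0 else 1 with hpdef
  set Q : Matrix (Fin d) (Fin d) ℂ := V * Matrix.diagonal p * W with hQdef
  have hQ2 : Q * Q = Q := by
    rw [hQdef, hconjmul]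
    have hfun : (fun i => p i * p i) = p := funext fun i => by
      by_cases h : b i = 0 <;> simp [hpdef, h]
    rw [hfun]
  have hQH : Q.IsHermitian := by
    have hps : star p = p := by
      funext i
      by_cases h : b i = 0 <;> simp [hpdef, h]
    show Qᴴ = Q
    rw [hQdef, hWdef, Matrix.star_eq_conjTranspose, Matrix.conjTranspose_mul,
      Matrix.conjTranspose_mul, Matrix.conjTranspose_conjTranspose,
      Matrix.diagonal_conjTranspose, hps, Matrix.mul_assoc]
  have hQB : Q * B = B := by
    rw [hQdef, hspec, hconjmul]
    have hfun : (fun i => p i * (b i : ℂ)) = fun i => (b i : ℂ) := funext fun i => by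
      by_cases h : b i = 0 <;> simp [hpdef, h]
    rw [hfun]
  set g : Fin d → ℂ := fun i => if b i = 0 then 0 else ((b i : ℂ))⁻¹ with hgdef
  have hBC : B * (V * Matrix.diagonal g * W) = Q := by
    rw [hspec, hconjmul, hQdef]
    have hfun : (fun i => (b i : ℂ) * g i) = p := funext fun i => by
      by_cases h : b i = 0
      · simp [hgdef, hpdef, h]
      · have hne : (b i : ℂ) ≠ 0 := Complex.ofReal_ne_zero.2 h
        simp [hgdef, hpdef, h, mul_inv_cancel₀ hne]
    rw [hfun]
  have hrQ : LinearMap.range Q.mulVecLin = LinearMap.range B.mulVecLin := by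
    apply le_antisymm
    · rw [← hBC, Matrix.mulVecLin_mul]
      exact LinearMap.range_comp_le_range _ _
    · conv_lhs => rw [← hQB]
      rw [Matrix.mulVecLin_mul]
      exact LinearMap.range_comp_le_range _ _
  have hrPQ : LinearMap.range P.mulVecLin = LinearMap.range Q.mulVecLin := hrange.trans hrQ.symm
  have hPQ : P * Q = Q := aux_fix P Q hP2 hrPQ.ge
  have hQP : Q * P = P := aux_fix Q P hQ2 hrPQ.le
  have hPeq : P = Q := by
    have h1 : Pᴴ = (Q * P)ᴴ := by rw [hQP]
    rw [Matrix.conjTranspose_mul, hP.eq, hQH.eq] at h1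
    rw [h1, hPQ]
  -- support
  set supp : Finset (Fin d) := Finset.univ.filter (fun i => b i ≠ 0) with hsuppdef
  have htrP : ((P * A).trace).re = ∑ i ∈ supp, a i := by
    rw [hPeq, hQdef, htr_conj, Complex.re_sum, hsuppdef, Finset.sum_filter]
    refine Finset.sum_congr rfl fun i _ => ?_
    by_cases h : b i = 0 <;> simp [hpdef, h, hadef]
  have htrA : (A.trace).re = ∑ i, a i := by
    have h1 : (W * A * V).trace = A.trace := by
      rw [Matrix.trace_mul_cycle, hWdef]
      rw [show V * star V = 1 from Matrix.mem_unitaryGroup_iff.mp (hBh.eigenvectorUnitary).2]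
      rw [Matrix.one_mul]
    rw [← h1, Matrix.trace, Complex.re_sum]
    rfl
  have hbsupp : ∑ i ∈ supp, b i = 1 := by
    rw [hsuppdef, Finset.sum_filter_ne_zero, hsum_b]
  have hne : supp.Nonempty := by
    by_contra h
    rw [Finset.not_nonempty_iff_eq_empty] at h
    rw [h, Finset.sum_empty] at hbsupp
    norm_num at hbsupp
  set T : ℝ := ∑ i ∈ supp, a i with hTdef
  have hTpos : 0 < T := Finset.sum_pos (fun i _ => hapos i) hne
  have hradon : 1 / T^2 ≤ ∑ i ∈ supp, (b i)^3 / (a i)^2 := by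
    have h := radon_sum supp b a (fun i _ => hb0 i) (fun i _ => hapos i)
    rw [hbsupp] at h
    simpa using h
  have hstep : ∑ i ∈ supp, (b i)^3 / (a i)^2 ≤ ∑ i, (b i)^3 * c i := by
    calc ∑ i ∈ supp, (b i)^3 / (a i)^2 ≤ ∑ i ∈ supp, (b i)^3 * c i := by
          apply Finset.sum_le_sum
          intro i _
          rw [div_eq_mul_inv]
          refine mul_le_mul_of_nonneg_left ?_ (pow_nonneg (hb0 i) 3)
          rw [inv_eq_one_div, div_le_iff₀ (pow_pos (hapos i) 2)]
          nlinarith [hkey i]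
      _ ≤ ∑ i, (b i)^3 * c i := by
          refine Finset.sum_le_sum_of_subset_of_nonneg (Finset.filter_subset _ _)
            fun i _ _ => mul_nonneg (pow_nonneg (hb0 i) 3) (hcpos i).le
  have hmain : (T^2)⁻¹ ≤ ((B ^ 3 * (A⁻¹) ^ 2).trace).re := by
    rw [htrS, inv_eq_one_div]
    exact le_trans hradon hstep
  constructor
  · rw [htrP]
    exact hmain
  · have hTA : T ≤ (A.trace).re := by
      rw [htrA, hTdef]
      exact Finset.sum_le_sum_of_subset_of_nonneg (Finset.filter_subset _ _)
        fun i _ _ => (hapos i).le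
    refine le_trans ?_ hmain
    have h2 : T^2 ≤ ((A.trace).re)^2 := by nlinarith
    exact inv_anti₀ (by positivity) h2
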